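/- arXiv:1309.3980 — 3 statements merged into one kernel-verified Lean document; each statement's English description precedes it below -/
import Mathlib

section
/- Let ρ > 0 and ρ_p > 0 be real numbers and H ∈ ℝ³. Then the 8×8 block matrix A₀ = [[ρ_p/ρ, 0, -(ρ_p/ρ)Hᵀ, 0], [0, ρ I₃, 0₃, 0], [-(ρ_p/ρ)H, 0₃, I₃ + (ρ_p/ρ) H⊗H, 0], [0, 0, 0, 1]] (acting on vectors (q, v, H', S) with q, S ∈ ℝ and v, H' ∈ ℝ³) is symmetric and positive definite. -/
open Matrix

@[simp] lemma consv3_2 {α : Type*} (a : α) (u : Fin 2 → α) :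
    Matrix.vecCons a u (2 : Fin 3) = u (1 : Fin 2) := rfl
@[simp] lemma consv4_2 {α : Type*} (a : α) (u : Fin 3 → α) :
    Matrix.vecCons a u (2 : Fin 4) = u (1 : Fin 3) := rfl
@[simp] lemma consv4_3 {α : Type*} (a : α) (u : Fin 3 → α) :
    Matrix.vecCons a u (3 : Fin 4) = u (2 : Fin 3) := rfl
@[simp] lemma consv5_2 {α : Type*} (a : α) (u : Fin 4 → α) :
    Matrix.vecCons a u (2 : Fin 5) = u (1 : Fin 4) := rfl
@[simp] lemma consv5_3 {α : Type*} (a : α) (u : Fin 4 → α) :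
    Matrix.vecCons a u (3 : Fin 5) = u (2 : Fin 4) := rfl
@[simp] lemma consv5_4 {α : Type*} (a : α) (u : Fin 4 → α) :
    Matrix.vecCons a u (4 : Fin 5) = u (3 : Fin 4) := rfl
@[simp] lemma consv6_2 {α : Type*} (a : α) (u : Fin 5 → α) :
    Matrix.vecCons a u (2 : Fin 6) = u (1 : Fin 5) := rfl
@[simp] lemma consv6_3 {α : Type*} (a : α) (u : Fin 5 → α) :
    Matrix.vecCons a u (3 : Fin 6) = u (2 : Fin 5) := rfl
@[simp] lemma consv6_4 {α : Type*} (a : α) (u : Fin 5 → α) :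
    Matrix.vecCons a u (4 : Fin 6) = u (3 : Fin 5) := rfl
@[simp] lemma consv6_5 {α : Type*} (a : α) (u : Fin 5 → α) :
    Matrix.vecCons a u (5 : Fin 6) = u (4 : Fin 5) := rfl
@[simp] lemma consv7_2 {α : Type*} (a : α) (u : Fin 6 → α) :
    Matrix.vecCons a u (2 : Fin 7) = u (1 : Fin 6) := rfl
@[simp] lemma consv7_3 {α : Type*} (a : α) (u : Fin 6 → α) :
    Matrix.vecCons a u (3 : Fin 7) = u (2 : Fin 6) := rfl
@[simp] lemma consv7_4 {α : Type*} (a : α) (u : Fin 6 → α) :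
    Matrix.vecCons a u (4 : Fin 7) = u (3 : Fin 6) := rfl
@[simp] lemma consv7_5 {α : Type*} (a : α) (u : Fin 6 → α) :
    Matrix.vecCons a u (5 : Fin 7) = u (4 : Fin 6) := rfl
@[simp] lemma consv7_6 {α : Type*} (a : α) (u : Fin 6 → α) :
    Matrix.vecCons a u (6 : Fin 7) = u (5 : Fin 6) := rfl
@[simp] lemma consv8_2 {α : Type*} (a : α) (u : Fin 7 → α) :
    Matrix.vecCons a u (2 : Fin 8) = u (1 : Fin 7) := rfl
@[simp] lemma consv8_3 {α : Type*} (a : α) (u : Fin 7 → α) :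
    Matrix.vecCons a u (3 : Fin 8) = u (2 : Fin 7) := rfl
@[simp] lemma consv8_4 {α : Type*} (a : α) (u : Fin 7 → α) :
    Matrix.vecCons a u (4 : Fin 8) = u (3 : Fin 7) := rfl
@[simp] lemma consv8_5 {α : Type*} (a : α) (u : Fin 7 → α) :
    Matrix.vecCons a u (5 : Fin 8) = u (4 : Fin 7) := rfl
@[simp] lemma consv8_6 {α : Type*} (a : α) (u : Fin 7 → α) :
    Matrix.vecCons a u (6 : Fin 8) = u (5 : Fin 7) := rfl
@[simp] lemma consv8_7 {α : Type*} (a : α) (u : Fin 7 → α) :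
    Matrix.vecCons a u (7 : Fin 8) = u (6 : Fin 7) := rfl

@[simp] lemma vecTail_const' {α : Type*} {n : ℕ} (a : α) :
    Matrix.vecTail (fun _ : Fin (n + 1) => a) = fun _ : Fin n => a := rfl

set_option maxHeartbeats 1000000 in
/-- The symmetrized MHD coefficient matrix `A₀` is symmetric and positive definite
when `ρ > 0` and `ρ_p > 0`. -/
theorem stmt0 (ρ ρp : ℝ) (hρ : 0 < ρ) (hρp : 0 < ρp) (H : Fin 3 → ℝ) :
    let r := ρp / ρ
    let A₀ : Matrix (Fin 8) (Fin 8) ℝ :=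
      !![r, 0, 0, 0, -(r * H 0), -(r * H 1), -(r * H 2), 0;
         0, ρ, 0, 0, 0, 0, 0, 0;
         0, 0, ρ, 0, 0, 0, 0, 0;
         0, 0, 0, ρ, 0, 0, 0, 0;
         -(r * H 0), 0, 0, 0, 1 + r * (H 0 * H 0), r * (H 0 * H 1), r * (H 0 * H 2), 0;
         -(r * H 1), 0, 0, 0, r * (H 1 * H 0), 1 + r * (H 1 * H 1), r * (H 1 * H 2), 0;
         -(r * H 2), 0, 0, 0, r * (H 2 * H 0), r * (H 2 * H 1), 1 + r * (H 2 * H 2), 0;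
         0, 0, 0, 0, 0, 0, 0, 1]
    A₀.IsSymm ∧ A₀.PosDef := by
  intro r A₀
  have hr : 0 < r := div_pos hρp hρ
  have hsymm : A₀.IsSymm := by
    rw [Matrix.IsSymm]
    ext i j
    fin_cases i <;> fin_cases j <;>
      first
        | rfl
        | exact (by ring : r * (H 0 * H 1) = r * (H 1 * H 0))
        | exact (by ring : r * (H 1 * H 0) = r * (H 0 * H 1))
        | exact (by ring : r * (H 0 * H 2) = r * (H 2 * H 0))
        | exact (by ring : r * (H 2 * H 0) = r * (H 0 * H 2))
        | exact (by ring : r * (H 1 * H 2) = r * (H 2 * H 1))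
        | exact (by ring : r * (H 2 * H 1) = r * (H 1 * H 2))
  have hherm : A₀.IsHermitian := by
    rw [Matrix.IsHermitian, Matrix.conjTranspose_eq_transpose_of_trivial]; exact hsymm
  refine ⟨hsymm, Matrix.PosDef.of_dotProduct_mulVec_pos hherm ?_⟩
  intro x hx
  have key : dotProduct (star x) (A₀ *ᵥ x) =
      r * (x 0 - (H 0 * x 4 + H 1 * x 5 + H 2 * x 6))^2
      + ρ * ((x 1)^2 + (x 2)^2 + (x 3)^2)
      + (x 4)^2 + (x 5)^2 + (x 6)^2 + (x 7)^2 := by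
    simp [A₀, dotProduct, Matrix.mulVec, Fin.sum_univ_eight, Matrix.of_apply, Matrix.cons_val', Pi.star_apply, star_trivial, Matrix.head_fin_const]
    ring
  rw [key]
  obtain ⟨i, hi⟩ := Function.ne_iff.mp hx
  have h0 : (0:ℝ) ≤ r * (x 0 - (H 0 * x 4 + H 1 * x 5 + H 2 * x 6))^2 :=
    mul_nonneg hr.le (sq_nonneg _)
  have h1 : (0:ℝ) ≤ ρ * ((x 1)^2 + (x 2)^2 + (x 3)^2) := by positivity
  have hsq : ∀ a b c : ℝ, 0 ≤ a → 0 ≤ b → 0 ≤ c → True := fun _ _ _ _ _ _ => trivial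
  fin_cases i
  · -- x 0 ≠ 0
    have hi : x 0 ≠ 0 := hi
    rcases eq_or_ne (x 4) 0 with h4 | h4
    · rcases eq_or_ne (x 5) 0 with h5 | h5
      · rcases eq_or_ne (x 6) 0 with h6 | h6
        · have hp : 0 < r * (x 0 - (H 0 * x 4 + H 1 * x 5 + H 2 * x 6)) ^ 2 := by
            rw [h4, h5, h6]
            have : x 0 - (H 0 * 0 + H 1 * 0 + H 2 * 0) = x 0 := by ring
            rw [this]
            exact mul_pos hr (sq_pos_of_ne_zero hi)
          nlinarith [sq_nonneg (x 4), sq_nonneg (x 5), sq_nonneg (x 6), sq_nonneg (x 7)]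
        · nlinarith [sq_pos_of_ne_zero h6, sq_nonneg (x 4), sq_nonneg (x 5), sq_nonneg (x 7)]
      · nlinarith [sq_pos_of_ne_zero h5, sq_nonneg (x 4), sq_nonneg (x 6), sq_nonneg (x 7)]
    · nlinarith [sq_pos_of_ne_zero h4, sq_nonneg (x 5), sq_nonneg (x 6), sq_nonneg (x 7)]
  · have hi : x 1 ≠ 0 := hi
    nlinarith [mul_pos hρ (sq_pos_of_ne_zero hi), mul_nonneg hρ.le (sq_nonneg (x 2)),
      mul_nonneg hρ.le (sq_nonneg (x 3)), sq_nonneg (x 4), sq_nonneg (x 5), sq_nonneg (x 6),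
      sq_nonneg (x 7)]
  · have hi : x 2 ≠ 0 := hi
    nlinarith [mul_pos hρ (sq_pos_of_ne_zero hi), mul_nonneg hρ.le (sq_nonneg (x 1)),
      mul_nonneg hρ.le (sq_nonneg (x 3)), sq_nonneg (x 4), sq_nonneg (x 5), sq_nonneg (x 6),
      sq_nonneg (x 7)]
  · have hi : x 3 ≠ 0 := hi
    nlinarith [mul_pos hρ (sq_pos_of_ne_zero hi), mul_nonneg hρ.le (sq_nonneg (x 1)),
      mul_nonneg hρ.le (sq_nonneg (x 2)), sq_nonneg (x 4), sq_nonneg (x 5), sq_nonneg (x 6),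
      sq_nonneg (x 7)]
  · have hi : x 4 ≠ 0 := hi
    nlinarith [sq_pos_of_ne_zero hi, sq_nonneg (x 5), sq_nonneg (x 6), sq_nonneg (x 7)]
  · have hi : x 5 ≠ 0 := hi
    nlinarith [sq_pos_of_ne_zero hi, sq_nonneg (x 4), sq_nonneg (x 6), sq_nonneg (x 7)]
  · have hi : x 6 ≠ 0 := hi
    nlinarith [sq_pos_of_ne_zero hi, sq_nonneg (x 4), sq_nonneg (x 5), sq_nonneg (x 7)]
  · have hi : x 7 ≠ 0 := hi
    nlinarith [sq_pos_of_ne_zero hi, sq_nonneg (x 4), sq_nonneg (x 5), sq_nonneg (x 6)]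
end

section
/- Let ν = (ν₁, ν₂, ν₃) ∈ ℝ³ and define the 6×6 matrix 𝔅₀ by 𝔅₀ = [[I₃, C(ν)ᵀ],[C(ν), I₃]], where C(ν) is the matrix of the cross product with ν, i.e. C(ν)x = ν × x (explicitly 𝔅₀ = [[1,0,0,0,ν₃,-ν₂],[0,1,0,-ν₃,0,ν₁],[0,0,1,ν₂,-ν₁,0],[0,-ν₃,ν₂,1,0,0],[ν₃,0,-ν₁,0,1,0],[-ν₂,ν₁,0,0,0,1]]). Then 𝔅₀ is symmetric, and 𝔅₀ is positive definite if and only if |ν| < 1. -/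
open Matrix

@[simp] private lemma cons_val_five' {α : Type*} {m : ℕ} (x : α) (u : Fin (m+5) → α) :
    vecCons x u 5 = vecHead (vecTail (vecTail (vecTail (vecTail u)))) :=
  rfl

private lemma key_scalar (a b d s : ℝ) (ha : 0 ≤ a) (hb : 0 ≤ b) (hd : d ^ 2 ≤ s * a * b)
    (hs : s < 1) (hab : 0 < a + b) : 0 < a + b - 2 * d := by
  by_contra h
  push_neg at h
  have h1 : 0 ≤ 2 * d - (a + b) := by linarith
  have h2 : 0 ≤ 2 * d + (a + b) := by linarith
  have h3 : (a + b) ^ 2 ≤ 4 * d ^ 2 := by nlinarith [mul_nonneg h1 h2]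
  have h4 : 4 * (a * b) ≤ (a + b) ^ 2 := by nlinarith [sq_nonneg (a - b)]
  have h5 : a * b ≤ s * (a * b) := by nlinarith
  have h6 : a * b = 0 := by nlinarith [mul_nonneg ha hb]
  have hsab : s * a * b = 0 := by rw [mul_assoc, h6, mul_zero]
  have h7 : d ^ 2 ≤ 0 := by linarith
  have h8 : d = 0 := by nlinarith [sq_nonneg d]
  linarith

private lemma cs3 (p₁ p₂ p₃ q₁ q₂ q₃ : ℝ) :
    (p₁ * q₁ + p₂ * q₂ + p₃ * q₃) ^ 2 ≤
      (p₁ ^ 2 + p₂ ^ 2 + p₃ ^ 2) * (q₁ ^ 2 + q₂ ^ 2 + q₃ ^ 2) := by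
  nlinarith [sq_nonneg (p₁ * q₂ - p₂ * q₁), sq_nonneg (p₁ * q₃ - p₃ * q₁),
    sq_nonneg (p₂ * q₃ - p₃ * q₂)]

/-- The secondary symmetrizer `𝔅₀` is symmetric, and positive definite iff `|ν| < 1`. -/
theorem stmt5 (ν₁ ν₂ ν₃ : ℝ) :
    let B₀ : Matrix (Fin 6) (Fin 6) ℝ :=
      !![1, 0, 0, 0, ν₃, -ν₂;
         0, 1, 0, -ν₃, 0, ν₁;
         0, 0, 1, ν₂, -ν₁, 0;
         0, -ν₃, ν₂, 1, 0, 0;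
         ν₃, 0, -ν₁, 0, 1, 0;
         -ν₂, ν₁, 0, 0, 0, 1]
    B₀.IsSymm ∧ (B₀.PosDef ↔ Real.sqrt (ν₁^2 + ν₂^2 + ν₃^2) < 1) := by
  intro B₀
  have hsymm : B₀.IsSymm := by
    ext i j
    fin_cases i <;> fin_cases j <;> rfl
  have hsqrt : Real.sqrt (ν₁^2 + ν₂^2 + ν₃^2) < 1 ↔ ν₁^2 + ν₂^2 + ν₃^2 < 1 := by
    rw [Real.sqrt_lt' one_pos]; norm_num
  -- quadratic form formula
  have hQ : ∀ x : Fin 6 → ℝ, dotProduct (star x) (B₀ *ᵥ x) =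
      (x 0^2 + x 1^2 + x 2^2) + (x 3^2 + x 4^2 + x 5^2)
        - 2*(x 0*(ν₂*x 5 - ν₃*x 4) + x 1*(ν₃*x 3 - ν₁*x 5) + x 2*(ν₁*x 4 - ν₂*x 3)) := by
    intro x
    simp only [B₀]
    simp [dotProduct, mulVec, Fin.sum_univ_six, vecHead, vecTail]
    ring
  refine ⟨hsymm, ?_⟩
  rw [hsqrt]
  constructor
  · -- PosDef → s < 1
    intro hpd
    by_contra hs
    push_neg at hs
    by_cases h12 : ν₁ = 0 ∧ ν₂ = 0
    · obtain ⟨h1, h2⟩ := h12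
      have hx : (![0, ν₃, 0, 1, 0, 0] : Fin 6 → ℝ) ≠ 0 := by
        intro h
        have := congrFun h 3
        simp [Matrix.vecHead, Matrix.vecTail] at this
      have h := hpd.dotProduct_mulVec_pos hx
      rw [hQ] at h
      simp [Matrix.vecHead, Matrix.vecTail] at h
      subst h1; subst h2
      nlinarith [h, hs]
    · have hb : 0 < ν₁ ^ 2 + ν₂ ^ 2 := by
        rcases not_and_or.mp h12 with h | h
        · positivity
        · positivity
      have hx : (![(-(ν₁ * ν₃)), (-(ν₂ * ν₃)), ν₁^2 + ν₂^2, -ν₂, ν₁, 0] : Fin 6 → ℝ) ≠ 0 := by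
        intro h
        have := congrFun h 2
        simp [Matrix.vecHead, Matrix.vecTail] at this
        nlinarith
      have h := hpd.dotProduct_mulVec_pos hx
      rw [hQ] at h
      simp [Matrix.vecHead, Matrix.vecTail] at h
      nlinarith [h, mul_le_mul_of_nonneg_left hs (le_of_lt hb)]
  · -- s < 1 → PosDef
    intro hs
    have hherm : B₀.IsHermitian := by
      rw [Matrix.IsHermitian, conjTranspose_eq_transpose_of_trivial]
      exact hsymm
    refine Matrix.PosDef.of_dotProduct_mulVec_pos hherm ?_
    intro x hx
    have hab : 0 < (x 0^2 + x 1^2 + x 2^2) + (x 3^2 + x 4^2 + x 5^2) := by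
      obtain ⟨i, hi⟩ := Function.ne_iff.mp hx
      have hxi : 0 < x i ^ 2 := sq_pos_of_ne_zero hi
      have hsum : 0 < ∑ j, x j ^ 2 :=
        Finset.sum_pos' (fun j _ => sq_nonneg _) ⟨i, Finset.mem_univ i, hxi⟩
      rw [Fin.sum_univ_six] at hsum
      linarith
    set d : ℝ := x 0*(ν₂*x 5 - ν₃*x 4) + x 1*(ν₃*x 3 - ν₁*x 5) + x 2*(ν₁*x 4 - ν₂*x 3)
      with hd_def
    have hcross : (ν₂ * x 5 - ν₃ * x 4) ^ 2 + (ν₃ * x 3 - ν₁ * x 5) ^ 2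
        + (ν₁ * x 4 - ν₂ * x 3) ^ 2 ≤
        (ν₁^2 + ν₂^2 + ν₃^2) * (x 3^2 + x 4^2 + x 5^2) := by
      nlinarith [sq_nonneg (ν₁ * x 3 + ν₂ * x 4 + ν₃ * x 5)]
    have hcs := cs3 (x 0) (x 1) (x 2) (ν₂ * x 5 - ν₃ * x 4) (ν₃ * x 3 - ν₁ * x 5)
      (ν₁ * x 4 - ν₂ * x 3)
    have hd2 : d ^ 2 ≤ (ν₁^2 + ν₂^2 + ν₃^2) * (x 0^2 + x 1^2 + x 2^2) * (x 3^2 + x 4^2 + x 5^2) := by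
      calc d ^ 2 ≤ (x 0^2 + x 1^2 + x 2^2) *
            ((ν₂ * x 5 - ν₃ * x 4) ^ 2 + (ν₃ * x 3 - ν₁ * x 5) ^ 2
              + (ν₁ * x 4 - ν₂ * x 3) ^ 2) := hcs
        _ ≤ (ν₁^2 + ν₂^2 + ν₃^2) * (x 0^2 + x 1^2 + x 2^2) * (x 3^2 + x 4^2 + x 5^2) := by
            nlinarith [mul_le_mul_of_nonneg_left hcross
              (by positivity : (0:ℝ) ≤ x 0^2 + x 1^2 + x 2^2)]
    have key := key_scalar (x 0^2 + x 1^2 + x 2^2) (x 3^2 + x 4^2 + x 5^2) d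
      (ν₁^2 + ν₂^2 + ν₃^2) (by positivity) (by positivity)
      (by linarith [hd2]) hs hab
    rw [hQ x]
    linarith [key]
end

section
/- Let Ψ₁, Ψ₂, Ψ₃, Ψ_t ∈ ℝ with 1+Ψ₁ > 0 and ε²Ψ_t² < 1, set |N̂|² = 1+Ψ₂²+Ψ₃². Then the cubic polynomial p(τ) = τ³ - (|N̂|² + 2(1+Ψ₁)² - ε²Ψ_t²)τ² + (1+Ψ₁)²(1-ε²Ψ_t²)(|N̂|²+(1+Ψ₁)²+1)τ - (1+Ψ₁)⁴(1-ε²Ψ_t²)² has all of its real roots positive; consequently any real symmetric matrix whose characteristic polynomial is p(τ)² is positive definite. -/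
open Matrix Polynomial

lemma my_eval_charpoly {n : ℕ} (M : Matrix (Fin n) (Fin n) ℝ) (μ : ℝ) :
    M.charpoly.eval μ = (Matrix.diagonal (fun _ => μ) - M).det := by
  rw [Matrix.charpoly, ← Polynomial.coe_evalRingHom, RingHom.map_det]
  congr 1
  ext i j
  by_cases h : i = j <;>
    simp [Matrix.charmatrix_apply, h, Matrix.diagonal_apply]

/-- All real roots of the cubic `p` are positive; consequently any real symmetric
matrix with characteristic polynomial `p²` is positive definite. -/
theorem stmt9 (Ψ₁ Ψ₂ Ψ₃ Ψt ε : ℝ) (h1 : 0 < 1 + Ψ₁) (h2 : ε^2 * Ψt^2 < 1) :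
    let N2 : ℝ := 1 + Ψ₂^2 + Ψ₃^2
    let p : Polynomial ℝ :=
      X^3 - C (N2 + 2*(1+Ψ₁)^2 - ε^2*Ψt^2) * X^2
        + C ((1+Ψ₁)^2 * (1-ε^2*Ψt^2) * (N2 + (1+Ψ₁)^2 + 1)) * X
        - C ((1+Ψ₁)^4 * (1-ε^2*Ψt^2)^2)
    (∀ τ : ℝ, p.IsRoot τ → 0 < τ) ∧
    (∀ M : Matrix (Fin 6) (Fin 6) ℝ, M.IsSymm → M.charpoly = p^2 → M.PosDef) := by
  intro N2 p
  have hN2 : (1:ℝ) ≤ N2 := by simp only [N2]; nlinarith [sq_nonneg Ψ₂, sq_nonneg Ψ₃]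
  have hsq : (0:ℝ) < (1+Ψ₁)^2 := by positivity
  have he : (0:ℝ) < 1 - ε^2*Ψt^2 := by linarith
  have ha : 0 < N2 + 2*(1+Ψ₁)^2 - ε^2*Ψt^2 := by nlinarith
  have hb : 0 < (1+Ψ₁)^2 * (1-ε^2*Ψt^2) * (N2 + (1+Ψ₁)^2 + 1) := by
    apply mul_pos (mul_pos hsq he); nlinarith
  have hc : 0 < (1+Ψ₁)^4 * (1-ε^2*Ψt^2)^2 := by positivity
  have hpos : ∀ τ : ℝ, p.IsRoot τ → 0 < τ := by
    intro τ hτ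
    have hev : τ^3 - (N2 + 2*(1+Ψ₁)^2 - ε^2*Ψt^2)*τ^2
        + ((1+Ψ₁)^2 * (1-ε^2*Ψt^2) * (N2 + (1+Ψ₁)^2 + 1))*τ
        - ((1+Ψ₁)^4 * (1-ε^2*Ψt^2)^2) = 0 := by
      simpa [p, Polynomial.IsRoot] using hτ
    by_contra hle
    push_neg at hle
    nlinarith [mul_nonneg ha.le (sq_nonneg τ), mul_nonneg (neg_nonneg.2 hle) (sq_nonneg τ),
      mul_nonneg hb.le (neg_nonneg.2 hle)]
  refine ⟨hpos, ?_⟩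
  intro M hsym hcp
  have hherm : M.IsHermitian := by
    exact Matrix.isHermitian_iff_isSymm.mpr hsym
  have heig : ∀ i, 0 < hherm.eigenvalues i := by
    intro i
    set μ := hherm.eigenvalues i with hμ
    have hv : M *ᵥ ⇑(hherm.eigenvectorBasis i) = μ • ⇑(hherm.eigenvectorBasis i) :=
      hherm.mulVec_eigenvectorBasis i
    have hvne : ⇑(hherm.eigenvectorBasis i) ≠ 0 := by
      intro hz
      exact hherm.eigenvectorBasis.orthonormal.ne_zero i (by ext j; exact congrFun hz j)
    have hker : (Matrix.diagonal (fun _ => μ) - M) *ᵥ ⇑(hherm.eigenvectorBasis i) = 0 := by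
      rw [Matrix.sub_mulVec, hv]
      ext j
      simp [Matrix.mulVec_diagonal]
    have hdet : (Matrix.diagonal (fun _ : Fin 6 => μ) - M).det = 0 :=
      Matrix.exists_mulVec_eq_zero_iff.mp ⟨_, hvne, hker⟩
    have h0 : M.charpoly.eval μ = 0 := by
      rw [my_eval_charpoly]; exact hdet
    rw [hcp] at h0
    simp only [eval_pow] at h0
    exact hpos _ (pow_eq_zero_iff (two_ne_zero) |>.mp h0)
  have hsd : M.PosSemidef := hherm.posSemidef_iff_eigenvalues_nonneg.mpr fun i => (heig i).le
  have hdetpos : 0 < M.det := by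
    have := hherm.det_eq_prod_eigenvalues
    rw [this]
    exact Finset.prod_pos fun i _ => heig i
  refine posDef_iff_dotProduct_mulVec.mpr ⟨hherm, fun x hx => ?_⟩
  rcases ((posSemidef_iff_dotProduct_mulVec.mp hsd).2 x).lt_or_eq with h | h
  · exact h
  · exfalso
    have hmv : M *ᵥ x = 0 := (hsd.dotProduct_mulVec_zero_iff x).mp h.symm
    have : M.det = 0 := (Matrix.exists_mulVec_eq_zero_iff).mp ⟨x, hx, hmv⟩
    linarith
end
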